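/- Let T ∈ R_α(Q) be Schurian and let ψ be a one-parameter subgroup of Gl_α with ψ(t)∗T = t.T for all t ∈ ℂ*. Then for every M ∈ Att(T), the intersection of the Gl_α-orbit of M with Att(T) equals the U_ψ-orbit of M inside Att(T): {g∗M : g ∈ Gl_α} ∩ Att(T) = {u∗M : u ∈ U_ψ}. In particular, for g ∈ Gl_α and M ∈ Att(T), g∗M ∈ Att(T) if and only if g∗M = u∗M for some u ∈ U_ψ. -/

import Mathlib

open Filter
open scoped Topology

namespace QuivC

variable {V A : Type} [Fintype V] [Fintype A] (s t : A → V) (α : V → ℕ) (γ : A → ℤ)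

/-- The representation variety `R_α(Q) = ⊕_a Mat_{α_{t(a)} × α_{s(a)}}(ℂ)`. -/
abbrev RA : Type := ∀ a : A, Matrix (Fin (α (t a))) (Fin (α (s a))) ℂ

/-- The base change group `Gl_α = ∏_q GL_{α_q}(ℂ)`. -/
abbrev GLa : Type := ∀ q : V, GL (Fin (α q)) ℂ

/-- Base change action: `(g∗M)_a = g_{t(a)} M_a g_{s(a)}^{-1}`. -/
noncomputable def bc (g : GLa α) (M : RA s t α) : RA s t α :=
  fun a => (g (t a) : Matrix (Fin (α (t a))) (Fin (α (t a))) ℂ) * M a *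
    (((g (s a))⁻¹ : GL (Fin (α (s a))) ℂ) : Matrix (Fin (α (s a))) (Fin (α (s a))) ℂ)

/-- A one-parameter subgroup of `Gl_α`, given by the data of conjugating matrices
`h_q` and integer exponents: `ψ_q(z) = h_q · diag(z^{e_{q,i}}) · h_q^{-1}`. -/
structure OneParam (α : V → ℕ) where
  h : ∀ q, GL (Fin (α q)) ℂ
  e : ∀ q, Fin (α q) → ℤ

/-- The value `ψ_q(z)` of a one-parameter subgroup (a matrix; invertible for `z ≠ 0`). -/
noncomputable def OneParam.val {α : V → ℕ} (ψ : OneParam α) (z : ℂ) (q : V) :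
    Matrix (Fin (α q)) (Fin (α q)) ℂ :=
  (ψ.h q : Matrix _ _ ℂ) * Matrix.diagonal (fun i => z ^ (ψ.e q i)) *
    (((ψ.h q)⁻¹ : GL (Fin (α q)) ℂ) : Matrix _ _ ℂ)

/-- The action of `ψ̂(z) = (ψ(z), z^n) ∈ Ĝ_α` on `R_α(Q)`:
`(ψ̂(z).M)_a = (z^n)^{-γ_a} ψ(z)_{t(a)} M_a ψ(z)_{s(a)}^{-1}`
(for `z ≠ 0` one has `ψ(z)^{-1} = ψ(z⁻¹)`). -/
noncomputable def hatAct (ψ : OneParam α) (n : ℤ) (z : ℂ) (M : RA s t α) : RA s t α :=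
  fun a => ((z ^ n) ^ (-(γ a))) • (ψ.val z (t a) * M a * ψ.val z⁻¹ (s a))

end QuivC


namespace QuivC

open Filter
open scoped Topology

variable {V A : Type} [Fintype V] [Fintype A] (s t : A → V) (α : V → ℕ) (γ : A → ℤ)

/-- `T ∈ R_α(Q)` is Schurian: every intertwining tuple of matrices is scalar. -/
def Schurian (T : RA s t α) : Prop :=
  ∀ φ : ∀ q, Matrix (Fin (α q)) (Fin (α q)) ℂ,
    (∀ a, φ (t a) * T a = T a * φ (s a)) →
    ∃ c : ℂ, ∀ q, φ q = c • (1 : Matrix (Fin (α q)) (Fin (α q)) ℂ)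

/-- The subgroup `U_ψ = {g : lim_{z→0} ψ_q(z) g_q ψ_q(z)^{-1} = μ·Id for all q,
for some μ ∈ ℂ*}`. -/
def Upsi (ψ : OneParam α) : Set (GLa α) :=
  {g | ∃ μ : ℂ, μ ≠ 0 ∧ ∀ q,
    Tendsto (fun z : ℂ => ψ.val z q * (g q : Matrix _ _ ℂ) * ψ.val z⁻¹ q)
      (𝓝[≠] 0) (𝓝 (μ • (1 : Matrix (Fin (α q)) (Fin (α q)) ℂ)))}

/-- The action of the pair `(ψ(z), z)`:
`((ψ(z),z).M)_a = z^{-γ_a} ψ(z)_{t(a)} M_a ψ(z)_{s(a)}^{-1}`. -/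
noncomputable def attAct (ψ : OneParam α) (z : ℂ) (M : RA s t α) : RA s t α :=
  fun a => (z ^ (-(γ a))) • (ψ.val z (t a) * M a * ψ.val z⁻¹ (s a))

/-- The lifted attracting set `Att(T) = {M : lim_{z→0} (ψ(z),z).M = T}`. -/
def Att (ψ : OneParam α) (T : RA s t α) : Set (RA s t α) :=
  {M | Tendsto (fun z : ℂ => attAct s t α γ ψ z M) (𝓝[≠] 0) (𝓝 T)}

/-- `ψ(z)∗T = z.T` for all `z ∈ ℂ*`: `T` is a lift of a torus fixed point with
associated one-parameter subgroup `ψ`. -/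
def FixedLift (ψ : OneParam α) (T : RA s t α) : Prop :=
  ∀ z : ℂ, z ≠ 0 → ∀ a, ψ.val z (t a) * T a * ψ.val z⁻¹ (s a) = (z ^ (γ a)) • T a

/-- `ψ` is in standard form: each `ψ_q(z)` is the diagonal matrix
`diag(z^{e_{q,i}})`. -/
def StdForm (ψ : OneParam α) : Prop :=
  ∀ (z : ℂ) (q : V), ψ.val z q = Matrix.diagonal (fun i => z ^ (ψ.e q i))

end QuivC



set_option linter.unusedSectionVars false
set_option maxHeartbeats 1000000

namespace QuivC

open Filter
open scoped Topology

variable {V A : Type} [Fintype V] [Fintype A] (s t : A → V) (α : V → ℕ) (γ : A → ℤ)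

/-- Tendsto version of matrix multiplication continuity. -/
lemma tendsto_matmul {ι : Type*} {l : Filter ι} {m n p : Type*} [Fintype n]
    {f : ι → Matrix m n ℂ} {g : ι → Matrix n p ℂ} {A : Matrix m n ℂ} {B : Matrix n p ℂ}
    (hf : Tendsto f l (𝓝 A)) (hg : Tendsto g l (𝓝 B)) :
    Tendsto (fun x => f x * g x) l (𝓝 (A * B)) := by
  have hc : Continuous fun pr : Matrix m n ℂ × Matrix n p ℂ => pr.1 * pr.2 :=
    Continuous.matrix_mul continuous_fst continuous_snd
  have h2 := (hc.tendsto (A, B)).comp (hf.prodMk_nhds hg)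
  exact h2

lemma mul_cancel_left {n m : Type*} [Fintype n] [DecidableEq n] {P Q : Matrix n n ℂ}
    (h : P * Q = 1) (X : Matrix n m ℂ) : P * (Q * X) = X := by
  rw [← Matrix.mul_assoc, h, Matrix.one_mul]

lemma ev_ne (P : ℂ → Prop) (h : ∀ z : ℂ, z ≠ 0 → P z) : ∀ᶠ z in 𝓝[≠] (0:ℂ), P z :=
  Filter.eventually_of_mem self_mem_nhdsWithin fun z hz => h z hz

/-- Limit of the (pointwise) inverse family. -/
lemma tendsto_inv_aux {n : ℕ} {f fi : ℂ → Matrix (Fin n) (Fin n) ℂ} {μ : ℂ} (hμ : μ ≠ 0)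
    (hfi : ∀ z : ℂ, z ≠ 0 → f z * fi z = 1)
    (hf : Tendsto f (𝓝[≠] (0:ℂ)) (𝓝 (μ • 1))) :
    Tendsto fi (𝓝[≠] (0:ℂ)) (𝓝 (μ⁻¹ • (1 : Matrix (Fin n) (Fin n) ℂ))) := by
  set L : Matrix (Fin n) (Fin n) ℂ := μ • 1 with hL
  have hdet : Tendsto (fun z => (f z).det) (𝓝[≠] (0:ℂ)) (𝓝 L.det) :=
    (continuous_id.matrix_det.tendsto _).comp hf
  have hdet0 : L.det ≠ 0 := by
    rw [hL, Matrix.det_smul, Matrix.det_one, mul_one]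
    exact pow_ne_zero _ hμ
  have hadj : Tendsto (fun z => (f z).adjugate) (𝓝[≠] (0:ℂ)) (𝓝 L.adjugate) :=
    (continuous_id.matrix_adjugate.tendsto _).comp hf
  have hmain : Tendsto (fun z => ((f z).det)⁻¹ • (f z).adjugate) (𝓝[≠] (0:ℂ))
      (𝓝 (L.det⁻¹ • L.adjugate)) := (hdet.inv₀ hdet0).smul hadj
  have hLinv : L⁻¹ = μ⁻¹ • (1 : Matrix (Fin n) (Fin n) ℂ) := by
    apply Matrix.inv_eq_right_inv
    rw [hL, Matrix.smul_mul, Matrix.mul_smul, smul_smul, mul_inv_cancel₀ hμ, one_mul, one_smul]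
  have hlim : L.det⁻¹ • L.adjugate = μ⁻¹ • (1 : Matrix (Fin n) (Fin n) ℂ) := by
    rw [← hLinv, Matrix.inv_def, Ring.inverse_eq_inv']
  rw [← hlim]
  refine Tendsto.congr' ?_ hmain
  refine ev_ne _ fun z hz => ?_
  have h1 : (f z)⁻¹ = fi z := Matrix.inv_eq_right_inv (hfi z hz)
  rw [← h1, Matrix.inv_def, Ring.inverse_eq_inv']

lemma psiv_mul_inv (ψ : OneParam α) {z : ℂ} (hz : z ≠ 0) (q : V) :
    ψ.val z q * ψ.val z⁻¹ q = 1 := by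
  have h1 : ((ψ.h q : Matrix (Fin (α q)) (Fin (α q)) ℂ)) *
      (((ψ.h q)⁻¹ : GL (Fin (α q)) ℂ) : Matrix _ _ ℂ) = 1 := by exact_mod_cast (ψ.h q).mul_inv
  have h2 : ((((ψ.h q)⁻¹ : GL (Fin (α q)) ℂ) : Matrix _ _ ℂ)) *
      ((ψ.h q : Matrix (Fin (α q)) (Fin (α q)) ℂ)) = 1 := by exact_mod_cast (ψ.h q).inv_mul
  have hd : (Matrix.diagonal fun i => z ^ (ψ.e q i)) *
      (Matrix.diagonal fun i => (z⁻¹) ^ (ψ.e q i)) = (1 : Matrix (Fin (α q)) (Fin (α q)) ℂ) := by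
    rw [Matrix.diagonal_mul_diagonal]
    convert Matrix.diagonal_one using 2
    funext i
    rw [← mul_zpow, mul_inv_cancel₀ hz, one_zpow]
  unfold OneParam.val
  calc (↑(ψ.h q) * Matrix.diagonal (fun i => z ^ ψ.e q i) * ↑(ψ.h q)⁻¹) *
        (↑(ψ.h q) * Matrix.diagonal (fun i => (z⁻¹) ^ ψ.e q i) * ↑(ψ.h q)⁻¹)
      = ↑(ψ.h q) * (Matrix.diagonal (fun i => z ^ ψ.e q i) *
          ((↑(ψ.h q)⁻¹ * ↑(ψ.h q)) * Matrix.diagonal fun i => (z⁻¹) ^ ψ.e q i)) * ↑(ψ.h q)⁻¹ := by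
        simp only [Matrix.mul_assoc]
    _ = 1 := by rw [h2, Matrix.one_mul, hd, Matrix.mul_one, h1]

lemma psiv_inv_mul (ψ : OneParam α) {z : ℂ} (hz : z ≠ 0) (q : V) :
    ψ.val z⁻¹ q * ψ.val z q = 1 := by
  have := psiv_mul_inv α ψ (inv_ne_zero hz) q
  rwa [inv_inv] at this

end QuivC

namespace QuivC

open Filter
open scoped Topology

variable {V A : Type} [Fintype V] [Fintype A] (s t : A → V) (α : V → ℕ) (γ : A → ℤ)

/-- The fundamental intertwining identity. -/
lemma stepB (ψ : OneParam α) (g : GLa α) (M : RA s t α) {z : ℂ} (hz : z ≠ 0) (a : A) :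
    (ψ.val z (t a) * (g (t a) : Matrix _ _ ℂ) * ψ.val z⁻¹ (t a)) * attAct s t α γ ψ z M a
      = attAct s t α γ ψ z (bc s t α g M) a *
        (ψ.val z (s a) * (g (s a) : Matrix _ _ ℂ) * ψ.val z⁻¹ (s a)) := by
  have hgc : ((((g (s a))⁻¹ : GL (Fin (α (s a))) ℂ) : Matrix _ _ ℂ)) *
      ((g (s a) : Matrix (Fin (α (s a))) (Fin (α (s a))) ℂ)) = 1 := by
    exact_mod_cast (g (s a)).inv_mul
  simp only [attAct, bc, Matrix.smul_mul, Matrix.mul_smul]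
  congr 1
  simp only [Matrix.mul_assoc]
  rw [mul_cancel_left (psiv_inv_mul α ψ hz (t a)),
    mul_cancel_left (psiv_inv_mul α ψ hz (s a)),
    mul_cancel_left hgc]

/-- Expression of the action on a translated point. -/
lemma stepB' (ψ : OneParam α) (u : GLa α) (M : RA s t α) {z : ℂ} (hz : z ≠ 0) (a : A) :
    attAct s t α γ ψ z (bc s t α u M) a
      = (ψ.val z (t a) * (u (t a) : Matrix _ _ ℂ) * ψ.val z⁻¹ (t a)) * attAct s t α γ ψ z M a *
        (ψ.val z (s a) * (((u (s a))⁻¹ : GL (Fin (α (s a))) ℂ) : Matrix _ _ ℂ) * ψ.val z⁻¹ (s a)) := by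
  have hgc : ((u (s a) : Matrix (Fin (α (s a))) (Fin (α (s a))) ℂ)) *
      ((((u (s a))⁻¹ : GL (Fin (α (s a))) ℂ) : Matrix _ _ ℂ)) = 1 := by
    exact_mod_cast (u (s a)).mul_inv
  simp only [attAct, bc, Matrix.smul_mul, Matrix.mul_smul]
  congr 1
  simp only [Matrix.mul_assoc]
  rw [mul_cancel_left (psiv_inv_mul α ψ hz (t a)),
    mul_cancel_left (psiv_inv_mul α ψ hz (s a))]

/-- Main convergence computation for the conjugated family. -/
lemma stepA (ψ : OneParam α) (g : GLa α) (d0 : ℤ) (q : V)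
    (g' : Matrix (Fin (α q)) (Fin (α q)) ℂ)
    (hg' : ((((ψ.h q)⁻¹ : GL (Fin (α q)) ℂ) : Matrix _ _ ℂ) * (g q : Matrix _ _ ℂ) *
      (ψ.h q : Matrix _ _ ℂ)) = g')
    (hmin : ∀ i j : Fin (α q), g' i j ≠ 0 → d0 ≤ ψ.e q i - ψ.e q j) :
    Tendsto (fun z : ℂ => z ^ (-d0) • (ψ.val z q * (g q : Matrix _ _ ℂ) * ψ.val z⁻¹ q))
      (𝓝[≠] (0:ℂ))
      (𝓝 ((ψ.h q : Matrix _ _ ℂ) *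
        (Matrix.of fun i j => if ψ.e q i - ψ.e q j = d0 then g' i j else 0) *
        (((ψ.h q)⁻¹ : GL (Fin (α q)) ℂ) : Matrix _ _ ℂ))) := by
  have hinner : Tendsto
      (fun z : ℂ => (Matrix.of fun i j => z ^ (ψ.e q i - ψ.e q j - d0) * g' i j :
        Matrix (Fin (α q)) (Fin (α q)) ℂ))
      (𝓝[≠] (0:ℂ))
      (𝓝 (Matrix.of fun i j => if ψ.e q i - ψ.e q j = d0 then g' i j else 0)) := by
    refine tendsto_pi_nhds.mpr fun i => ?_
    refine tendsto_pi_nhds.mpr fun j => ?_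
    simp only [Matrix.of_apply]
    by_cases h0 : g' i j = 0
    · simp only [h0, mul_zero, if_neg, ite_self]
      exact tendsto_const_nhds
    · have hd : d0 ≤ ψ.e q i - ψ.e q j := hmin i j h0
      by_cases he : ψ.e q i - ψ.e q j = d0
      · simp only [he, sub_self, zpow_zero, one_mul, if_pos rfl]
        exact tendsto_const_nhds
      · have hk : 0 < ψ.e q i - ψ.e q j - d0 := by omega
        have hz0 : Tendsto (fun z : ℂ => z ^ (ψ.e q i - ψ.e q j - d0)) (𝓝[≠] (0:ℂ)) (𝓝 0) := by
          have hnat : ∀ z : ℂ, z ^ (ψ.e q i - ψ.e q j - d0)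
              = z ^ (ψ.e q i - ψ.e q j - d0).toNat := by
            intro z; rw [← zpow_natCast, Int.toNat_of_nonneg (le_of_lt hk)]
          simp only [hnat]
          have h2 := (continuous_pow ((ψ.e q i - ψ.e q j - d0).toNat)).tendsto (0:ℂ)
          rw [zero_pow (by omega)] at h2
          exact h2.mono_left nhdsWithin_le_nhds
        have := hz0.mul_const (g' i j)
        rw [zero_mul] at this
        simpa [if_neg he] using this
  have hev : ∀ z : ℂ, z ≠ 0 →
      (ψ.h q : Matrix _ _ ℂ) *
        (Matrix.of fun i j => z ^ (ψ.e q i - ψ.e q j - d0) * g' i j : Matrix _ _ ℂ) *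
        (((ψ.h q)⁻¹ : GL (Fin (α q)) ℂ) : Matrix _ _ ℂ)
      = z ^ (-d0) • (ψ.val z q * (g q : Matrix _ _ ℂ) * ψ.val z⁻¹ q) := by
    intro z hz
    have hsc : (Matrix.of fun i j => z ^ (ψ.e q i - ψ.e q j - d0) * g' i j :
        Matrix (Fin (α q)) (Fin (α q)) ℂ)
        = z ^ (-d0) • ((Matrix.diagonal fun i => z ^ ψ.e q i) * g' *
            (Matrix.diagonal fun i => (z⁻¹) ^ ψ.e q i)) := by
      ext i j
      simp only [Matrix.of_apply, Matrix.smul_apply, Matrix.mul_diagonal, Matrix.diagonal_mul,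
        smul_eq_mul]
      rw [inv_zpow, ← zpow_neg]
      rw [show ψ.e q i - ψ.e q j - d0 = -d0 + (ψ.e q i + -ψ.e q j) by ring,
        zpow_add₀ hz, zpow_add₀ hz]
      ring
    have hmid : ψ.val z q * (g q : Matrix _ _ ℂ) * ψ.val z⁻¹ q
        = (ψ.h q : Matrix _ _ ℂ) * ((Matrix.diagonal fun i => z ^ ψ.e q i) * g' *
            (Matrix.diagonal fun i => (z⁻¹) ^ ψ.e q i)) *
          (((ψ.h q)⁻¹ : GL (Fin (α q)) ℂ) : Matrix _ _ ℂ) := by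
      rw [← hg']
      unfold OneParam.val
      simp only [Matrix.mul_assoc]
    rw [hsc, hmid, Matrix.mul_smul, Matrix.smul_mul]
  have hT := tendsto_matmul (tendsto_matmul
    (tendsto_const_nhds (x := (ψ.h q : Matrix (Fin (α q)) (Fin (α q)) ℂ))) hinner)
    (tendsto_const_nhds (x := (((ψ.h q)⁻¹ : GL (Fin (α q)) ℂ) : Matrix (Fin (α q)) (Fin (α q)) ℂ)))
  refine Tendsto.congr' ?_ hT
  exact ev_ne _ hev

/-- If both `M` and `g∗M` lie in the attracting set of a Schurian `T`, then `g ∈ U_ψ`. -/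
lemma upsi_of_att (T : RA s t α) (hT : Schurian s t α T) (ψ : OneParam α)
    {M : RA s t α} (hM : M ∈ Att s t α γ ψ T) (g : GLa α)
    (hgM : bc s t α g M ∈ Att s t α γ ψ T) : g ∈ Upsi α ψ := by
  classical
  haveI : (𝓝[≠] (0:ℂ)).NeBot := Module.punctured_nhds_neBot ℂ ℂ 0
  set g' : ∀ q, Matrix (Fin (α q)) (Fin (α q)) ℂ := fun q =>
    ((((ψ.h q)⁻¹ : GL (Fin (α q)) ℂ) : Matrix _ _ ℂ) * (g q : Matrix _ _ ℂ) *
      (ψ.h q : Matrix _ _ ℂ)) with hg'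
  by_cases hex : ∃ p : (q : V) × (Fin (α q) × Fin (α q)), g' p.1 p.2.1 p.2.2 ≠ 0
  · -- main case
    set S : Finset ((q : V) × (Fin (α q) × Fin (α q))) :=
      Finset.univ.filter (fun p => g' p.1 p.2.1 p.2.2 ≠ 0) with hSdef
    have hS : S.Nonempty := by
      obtain ⟨p, hp⟩ := hex
      exact ⟨p, by simp [hSdef, hp]⟩
    set dg : ((q : V) × (Fin (α q) × Fin (α q))) → ℤ :=
      fun p => ψ.e p.1 p.2.1 - ψ.e p.1 p.2.2 with hdg
    set d0 : ℤ := S.inf' hS dg with hd0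
    obtain ⟨p0, hp0S, hp0⟩ := S.exists_mem_eq_inf' hS dg
    have hmin : ∀ q (i j : Fin (α q)), g' q i j ≠ 0 → d0 ≤ ψ.e q i - ψ.e q j := by
      intro q i j hne
      have hmem : (⟨q, (i, j)⟩ : (q : V) × (Fin (α q) × Fin (α q))) ∈ S := by
        simp [hSdef, hne]
      exact Finset.inf'_le dg hmem
    set c : ∀ q, Matrix (Fin (α q)) (Fin (α q)) ℂ := fun q =>
      (ψ.h q : Matrix _ _ ℂ) *
        (Matrix.of fun i j => if ψ.e q i - ψ.e q j = d0 then g' q i j else 0) *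
        (((ψ.h q)⁻¹ : GL (Fin (α q)) ℂ) : Matrix _ _ ℂ) with hc
    have hA : ∀ q, Tendsto
        (fun z : ℂ => z ^ (-d0) • (ψ.val z q * (g q : Matrix _ _ ℂ) * ψ.val z⁻¹ q))
        (𝓝[≠] (0:ℂ)) (𝓝 (c q)) := fun q => stepA α ψ g d0 q (g' q) rfl (fun i j h => hmin q i j h)
    -- intertwining in the limit
    have hint : ∀ a, c (t a) * T a = T a * c (s a) := by
      intro a
      have hMa : Tendsto (fun z : ℂ => attAct s t α γ ψ z M a) (𝓝[≠] (0:ℂ)) (𝓝 (T a)) :=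
        tendsto_pi_nhds.mp hM a
      have hYa : Tendsto (fun z : ℂ => attAct s t α γ ψ z (bc s t α g M) a)
          (𝓝[≠] (0:ℂ)) (𝓝 (T a)) := tendsto_pi_nhds.mp hgM a
      have hL := tendsto_matmul (hA (t a)) hMa
      have hR := tendsto_matmul hYa (hA (s a))
      refine tendsto_nhds_unique (Tendsto.congr' ?_ hL) hR
      refine ev_ne _ fun z hz => ?_
      show (z ^ (-d0) • (ψ.val z (t a) * (g (t a) : Matrix _ _ ℂ) * ψ.val z⁻¹ (t a))) *
          attAct s t α γ ψ z M a
        = attAct s t α γ ψ z (bc s t α g M) a *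
          (z ^ (-d0) • (ψ.val z (s a) * (g (s a) : Matrix _ _ ℂ) * ψ.val z⁻¹ (s a)))
      rw [Matrix.smul_mul, stepB s t α γ ψ g M hz a, Matrix.mul_smul]
    obtain ⟨μ, hμ⟩ := hT c hint
    -- extract information at p0
    obtain ⟨q0, i0, j0⟩ := p0
    have hne0 : g' q0 i0 j0 ≠ 0 := by
      have := hp0S
      simp only [hSdef, Finset.mem_filter] at this
      exact this.2
    have hdeq : ψ.e q0 i0 - ψ.e q0 j0 = d0 := by
      rw [hd0, hp0]
    have hXeq : (Matrix.of fun i j => if ψ.e q0 i - ψ.e q0 j = d0 then g' q0 i j else 0 :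
        Matrix (Fin (α q0)) (Fin (α q0)) ℂ) = μ • 1 := by
      have h2 : ((((ψ.h q0)⁻¹ : GL (Fin (α q0)) ℂ) : Matrix _ _ ℂ)) *
          ((ψ.h q0 : Matrix (Fin (α q0)) (Fin (α q0)) ℂ)) = 1 := by
        exact_mod_cast (ψ.h q0).inv_mul
      have hcq : (ψ.h q0 : Matrix (Fin (α q0)) (Fin (α q0)) ℂ) *
          (Matrix.of fun i j => if ψ.e q0 i - ψ.e q0 j = d0 then g' q0 i j else 0) *
          (((ψ.h q0)⁻¹ : GL (Fin (α q0)) ℂ) : Matrix _ _ ℂ) = μ • 1 := hμ q0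
      calc (Matrix.of fun i j => if ψ.e q0 i - ψ.e q0 j = d0 then g' q0 i j else 0 :
            Matrix (Fin (α q0)) (Fin (α q0)) ℂ)
          = (((((ψ.h q0)⁻¹ : GL (Fin (α q0)) ℂ) : Matrix _ _ ℂ)) *
              ((ψ.h q0 : Matrix _ _ ℂ))) *
            (Matrix.of fun i j => if ψ.e q0 i - ψ.e q0 j = d0 then g' q0 i j else 0) *
            (((((ψ.h q0)⁻¹ : GL (Fin (α q0)) ℂ) : Matrix _ _ ℂ)) *
              ((ψ.h q0 : Matrix _ _ ℂ))) := by rw [h2, Matrix.one_mul, Matrix.mul_one]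
        _ = (((ψ.h q0)⁻¹ : GL (Fin (α q0)) ℂ) : Matrix _ _ ℂ) *
            ((ψ.h q0 : Matrix _ _ ℂ) *
              (Matrix.of fun i j => if ψ.e q0 i - ψ.e q0 j = d0 then g' q0 i j else 0) *
              (((ψ.h q0)⁻¹ : GL (Fin (α q0)) ℂ) : Matrix _ _ ℂ)) *
            (ψ.h q0 : Matrix _ _ ℂ) := by simp only [Matrix.mul_assoc]
        _ = (((ψ.h q0)⁻¹ : GL (Fin (α q0)) ℂ) : Matrix _ _ ℂ) * (μ • 1) *
            (ψ.h q0 : Matrix _ _ ℂ) := by rw [hcq]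
        _ = μ • 1 := by
            rw [Matrix.mul_smul, Matrix.smul_mul, Matrix.mul_one, h2]
    have hentry := congrFun (congrFun hXeq i0) j0
    simp only [Matrix.of_apply, if_pos hdeq, Matrix.smul_apply, Matrix.one_apply,
      smul_eq_mul] at hentry
    have hij : i0 = j0 := by
      by_contra hij
      rw [if_neg hij, mul_zero] at hentry
      exact hne0 hentry
    have hμne : μ ≠ 0 := by
      rw [hij, if_pos rfl, mul_one] at hentry
      · rw [hij] at hne0; rw [hentry] at hne0; exact hne0
    have hd00 : d0 = 0 := by
      rw [hij] at hdeq; omega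
    refine ⟨μ, hμne, fun q => ?_⟩
    have htd := hA q
    rw [hμ q, hd00] at htd
    have hfun : (fun z : ℂ => z ^ (-(0:ℤ)) • (ψ.val z q * (g q : Matrix _ _ ℂ) * ψ.val z⁻¹ q))
        = fun z : ℂ => ψ.val z q * (g q : Matrix _ _ ℂ) * ψ.val z⁻¹ q := by
      funext z; rw [neg_zero, zpow_zero, one_smul]
    rw [hfun] at htd
    exact htd
  · -- degenerate case: all matrices are empty
    push_neg at hex
    refine ⟨1, one_ne_zero, fun q => ?_⟩
    have hzero : ∀ q, (g q : Matrix (Fin (α q)) (Fin (α q)) ℂ) = 0 := by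
      intro q
      have hg0 : g' q = 0 := by
        ext i j; exact hex ⟨q, (i, j)⟩
      have h1 : ((ψ.h q : Matrix (Fin (α q)) (Fin (α q)) ℂ)) *
          (((ψ.h q)⁻¹ : GL (Fin (α q)) ℂ) : Matrix _ _ ℂ) = 1 := by
        exact_mod_cast (ψ.h q).mul_inv
      have h2 : ((((ψ.h q)⁻¹ : GL (Fin (α q)) ℂ) : Matrix _ _ ℂ)) *
          ((ψ.h q : Matrix (Fin (α q)) (Fin (α q)) ℂ)) = 1 := by
        exact_mod_cast (ψ.h q).inv_mul
      have : (ψ.h q : Matrix _ _ ℂ) * g' q * (((ψ.h q)⁻¹ : GL (Fin (α q)) ℂ) : Matrix _ _ ℂ)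
          = (g q : Matrix _ _ ℂ) := by
        rw [hg']
        calc (ψ.h q : Matrix (Fin (α q)) (Fin (α q)) ℂ) *
              ((((ψ.h q)⁻¹ : GL (Fin (α q)) ℂ) : Matrix _ _ ℂ) * (g q : Matrix _ _ ℂ) *
                (ψ.h q : Matrix _ _ ℂ)) *
              (((ψ.h q)⁻¹ : GL (Fin (α q)) ℂ) : Matrix _ _ ℂ)
            = ((ψ.h q : Matrix _ _ ℂ) * (((ψ.h q)⁻¹ : GL (Fin (α q)) ℂ) : Matrix _ _ ℂ)) *
                (g q : Matrix _ _ ℂ) *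
              ((ψ.h q : Matrix _ _ ℂ) * (((ψ.h q)⁻¹ : GL (Fin (α q)) ℂ) : Matrix _ _ ℂ)) := by
              simp only [Matrix.mul_assoc]
          _ = (g q : Matrix _ _ ℂ) := by rw [h1, Matrix.one_mul, Matrix.mul_one]
      rw [← this, hg0, Matrix.mul_zero, Matrix.zero_mul]
    have hone : (1 : Matrix (Fin (α q)) (Fin (α q)) ℂ) = 0 := by
      have h1 : ((g q : Matrix (Fin (α q)) (Fin (α q)) ℂ)) *
          (((g q)⁻¹ : GL (Fin (α q)) ℂ) : Matrix _ _ ℂ) = 1 := by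
        exact_mod_cast (g q).mul_inv
      rw [hzero q, Matrix.zero_mul] at h1
      exact h1.symm
    have : (fun z : ℂ => ψ.val z q * (g q : Matrix _ _ ℂ) * ψ.val z⁻¹ q)
        = fun _ : ℂ => (0 : Matrix (Fin (α q)) (Fin (α q)) ℂ) := by
      funext z; rw [hzero q, Matrix.mul_zero, Matrix.zero_mul]
    rw [this, one_smul, hone]
    exact tendsto_const_nhds

/-- If `u ∈ U_ψ` and `M ∈ Att(T)`, then `u∗M ∈ Att(T)`. -/
lemma att_bc_of_upsi (T : RA s t α) (ψ : OneParam α)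
    {M : RA s t α} (hM : M ∈ Att s t α γ ψ T) {u : GLa α} (hu : u ∈ Upsi α ψ) :
    bc s t α u M ∈ Att s t α γ ψ T := by
  obtain ⟨μ, hμ, hconv⟩ := hu
  rw [Att, Set.mem_setOf_eq, tendsto_pi_nhds]
  intro a
  have hMa : Tendsto (fun z : ℂ => attAct s t α γ ψ z M a) (𝓝[≠] (0:ℂ)) (𝓝 (T a)) :=
    tendsto_pi_nhds.mp hM a
  have hfi : ∀ z : ℂ, z ≠ 0 →
      (ψ.val z (s a) * (u (s a) : Matrix _ _ ℂ) * ψ.val z⁻¹ (s a)) *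
        (ψ.val z (s a) * (((u (s a))⁻¹ : GL (Fin (α (s a))) ℂ) : Matrix _ _ ℂ) *
          ψ.val z⁻¹ (s a)) = 1 := by
    intro z hz
    have hgc : ((u (s a) : Matrix (Fin (α (s a))) (Fin (α (s a))) ℂ)) *
        ((((u (s a))⁻¹ : GL (Fin (α (s a))) ℂ) : Matrix _ _ ℂ)) = 1 := by
      exact_mod_cast (u (s a)).mul_inv
    calc (ψ.val z (s a) * (u (s a) : Matrix _ _ ℂ) * ψ.val z⁻¹ (s a)) *
          (ψ.val z (s a) * (((u (s a))⁻¹ : GL (Fin (α (s a))) ℂ) : Matrix _ _ ℂ) *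
            ψ.val z⁻¹ (s a))
        = ψ.val z (s a) * ((u (s a) : Matrix _ _ ℂ) *
            (ψ.val z⁻¹ (s a) * (ψ.val z (s a) *
              ((((u (s a))⁻¹ : GL (Fin (α (s a))) ℂ) : Matrix _ _ ℂ) * ψ.val z⁻¹ (s a))))) := by
          simp only [Matrix.mul_assoc]
      _ = ψ.val z (s a) * ((u (s a) : Matrix _ _ ℂ) *
            ((((u (s a))⁻¹ : GL (Fin (α (s a))) ℂ) : Matrix _ _ ℂ) * ψ.val z⁻¹ (s a))) := by
          rw [mul_cancel_left (psiv_inv_mul α ψ hz (s a))]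
      _ = ψ.val z (s a) * ψ.val z⁻¹ (s a) := by rw [mul_cancel_left hgc]
      _ = 1 := psiv_mul_inv α ψ hz (s a)
  have hinv := tendsto_inv_aux hμ hfi (hconv (s a))
  have hall := tendsto_matmul (tendsto_matmul (hconv (t a)) hMa) hinv
  have hval : (μ • (1 : Matrix (Fin (α (t a))) (Fin (α (t a))) ℂ)) * T a *
      (μ⁻¹ • (1 : Matrix (Fin (α (s a))) (Fin (α (s a))) ℂ)) = T a := by
    rw [Matrix.smul_mul, Matrix.one_mul, Matrix.mul_smul, Matrix.mul_one, smul_smul,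
      inv_mul_cancel₀ hμ, one_smul]
  rw [← hval]
  refine Tendsto.congr' ?_ hall
  refine ev_ne _ fun z hz => ?_
  exact (stepB' s t α γ ψ u M hz a).symm

end QuivC


open QuivC Filter
open scoped Topology

variable {V A : Type} [Fintype V] [Fintype A]

/-- Proposition `Uaction`.  Let `T ∈ R_α(Q)` be Schurian with a
one-parameter subgroup `ψ` satisfying `ψ(z)∗T = z.T`.  For every `M ∈ Att(T)`, the
intersection of the `Gl_α`-orbit of `M` with `Att(T)` is exactly the `U_ψ`-orbit of
`M`. -/
theorem statement16 (s t : A → V) (α : V → ℕ) (γ : A → ℤ)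
    (T : RA s t α) (hT : Schurian s t α T)
    (ψ : OneParam α) (hfix : FixedLift s t α γ ψ T) :
    ∀ M ∈ Att s t α γ ψ T,
      {N | ∃ g : GLa α, N = bc s t α g M} ∩ Att s t α γ ψ T =
      {N | ∃ u ∈ Upsi α ψ, N = bc s t α u M} := by
  intro M hM
  ext N
  constructor
  · rintro ⟨⟨g, rfl⟩, hNAtt⟩
    exact ⟨g, upsi_of_att s t α γ T hT ψ hM g hNAtt, rfl⟩
  · rintro ⟨u, hu, rfl⟩
    exact ⟨⟨u, rfl⟩, att_bc_of_upsi s t α γ T ψ hM hu⟩
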